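/- The three quivers of types 4_{3a}, 4_{3b}, 4_2 (with all vertex dimensions 1) have 5, 8 and 6 primitive oriented cycles respectively; in particular these three numbers are pairwise distinct. -/

import Mathlib

/-- An edge of a quiver with arrow-count function `a : V → V → ℕ` is a triple
`(s, t, k)` with `k < a s t`. A list of such triples is an oriented cycle if it
is nonempty, every entry is a genuine arrow, consecutive arrows are composable,
and the last arrow ends where the first one starts. -/
def IsOrientedCycle {V : Type*} (a : V → V → ℕ) (l : List (V × V × ℕ)) : Prop :=
  l ≠ [] ∧ (∀ e ∈ l, e.2.2 < a e.1 e.2.1) ∧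
    l.Chain' (fun e f => e.2.1 = f.1) ∧
    l.getLast?.map (fun e => e.2.1) = l.head?.map (fun e => e.1)

/-- An oriented cycle is primitive if no cyclic rotation of it decomposes as the
concatenation of two nontrivial oriented cycles. -/
def IsPrimitiveCycle {V : Type*} (a : V → V → ℕ) (l : List (V × V × ℕ)) : Prop :=
  IsOrientedCycle a l ∧
    ¬ ∃ (k : ℕ) (l₁ l₂ : List (V × V × ℕ)),
        IsOrientedCycle a l₁ ∧ IsOrientedCycle a l₂ ∧ l.rotate k = l₁ ++ l₂

/-- Cyclic-rotation relation on primitive cycles: the number of primitive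
oriented cycles of the quiver is the number of classes of this relation. -/
def CycleRot {V : Type*} (a : V → V → ℕ)
    (l l' : {l : List (V × V × ℕ) // IsPrimitiveCycle a l}) : Prop :=
  ∃ k, l.1.rotate k = l'.1

section Generic
variable {V : Type*} {a : V → V → ℕ} {l : List (V × V × ℕ)}

lemma cyclic_iff (hne : l ≠ []) :
    IsOrientedCycle a l ↔ (∀ e ∈ l, e.2.2 < a e.1 e.2.1) ∧
      ∀ i (h : i < l.length),
        (l[i]'h).2.1 = (l[(i+1) % l.length]'(Nat.mod_lt _ (List.length_pos_iff.mpr hne))).1 := by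
  have hpos : 0 < l.length := List.length_pos_iff.mpr hne
  constructor
  · rintro ⟨-, harr, hch, hcl⟩
    refine ⟨harr, fun i h => ?_⟩
    rcases Nat.lt_or_ge (i+1) l.length with h1 | h1
    · have := List.isChain_iff_getElem.mp hch i (by omega)
      simpa [Nat.mod_eq_of_lt h1] using this
    · have hi : i = l.length - 1 := by omega
      have hm : (i+1) % l.length = 0 := by
        subst hi; rw [Nat.sub_add_cancel hpos]; exact Nat.mod_self _
      rw [List.getLast?_eq_getLast hne, List.head?_eq_head hne] at hcl
      simp only [Option.map_some, Option.some.injEq] at hcl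
      rw [List.getLast_eq_getElem, List.head_eq_getElem_zero] at hcl
      subst hi
      simpa [hm] using hcl
  · rintro ⟨harr, hc⟩
    refine ⟨hne, harr, ?_, ?_⟩
    · rw [List.Chain', List.isChain_iff_getElem]
      intro i h
      have := hc i (by omega)
      simpa [List.get_eq_getElem, Nat.mod_eq_of_lt (show i + 1 < l.length by omega)] using this
    · have := hc (l.length - 1) (by omega)
      rw [List.getLast?_eq_getLast hne, List.head?_eq_head hne,
        List.getLast_eq_getElem, List.head_eq_getElem_zero]
      simp only [Option.map_some, Option.some.injEq]
      rw [Nat.sub_add_cancel hpos] at this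
      simpa [Nat.mod_self] using this

lemma cycle_rotate (h : IsOrientedCycle a l) (k : ℕ) : IsOrientedCycle a (l.rotate k) := by
  have hne : l ≠ [] := h.1
  have hpos : 0 < l.length := List.length_pos_iff.mpr hne
  have hne' : l.rotate k ≠ [] := by
    intro hc; apply hne; simpa using congrArg List.length hc
  rw [cyclic_iff hne] at h
  rw [cyclic_iff hne']
  refine ⟨fun e he => h.1 e ((List.mem_rotate).mp he), fun i hi => ?_⟩
  have hlen : (l.rotate k).length = l.length := List.length_rotate l k
  have g1 : ∀ (m : ℕ) (hm : m < (l.rotate k).length),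
      (l.rotate k)[m]'hm = l[(m + k) % l.length]'(Nat.mod_lt _ hpos) := by
    intro m hm
    have := List.get_rotate l k ⟨m, hm⟩
    simpa [List.get_eq_getElem] using this
  rw [g1, g1]
  have hidx : ((i + 1) % l.length + k) % l.length = ((i + k) % l.length + 1) % l.length := by
    rw [Nat.mod_add_mod, Nat.mod_add_mod, Nat.add_right_comm]
  simp only [hlen, hidx]
  exact h.2 ((i + k) % l.length) (Nat.mod_lt _ hpos)

lemma cycle_split (h : IsOrientedCycle a l) (m : ℕ) (h0 : 0 < m) (hm : m < l.length)
    (hsrc : (l[m]'hm).1 = (l[0]'(by omega)).1) :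
    IsOrientedCycle a (l.take m) ∧ IsOrientedCycle a (l.drop m) := by
  have hne : l ≠ [] := h.1
  have hpos : 0 < l.length := List.length_pos_iff.mpr hne
  rw [cyclic_iff hne] at h
  have hlt : (l.take m).length = m := by rw [List.length_take]; omega
  have hld : (l.drop m).length = l.length - m := List.length_drop
  have hnet : l.take m ≠ [] := by intro hc; rw [← List.length_eq_zero_iff] at hc; omega
  have hned : l.drop m ≠ [] := by intro hc; rw [← List.length_eq_zero_iff] at hc; omega
  constructor
  · rw [cyclic_iff hnet]
    refine ⟨fun e he => h.1 e (List.take_subset m l he), fun i hi => ?_⟩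
    rw [hlt] at hi
    rw [List.getElem_take, List.getElem_take]
    rcases Nat.lt_or_ge (i+1) m with h1 | h1
    · have := h.2 i (by omega)
      simp only [Nat.mod_eq_of_lt (by omega : i + 1 < l.length)] at this
      simp only [hlt, Nat.mod_eq_of_lt h1]
      exact this
    · have hi' : i = m - 1 := by omega
      have hz : (i + 1) % (l.take m).length = 0 := by
        rw [hlt, hi', Nat.sub_add_cancel h0, Nat.mod_self]
      simp only [hz]
      have h2 := h.2 i (by omega)
      simp only [Nat.mod_eq_of_lt (by omega : i + 1 < l.length)] at h2
      have : i + 1 = m := by omega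
      rw [h2]
      simp only [this, hsrc]
  · rw [cyclic_iff hned]
    refine ⟨fun e he => h.1 e (List.drop_subset m l he), fun i hi => ?_⟩
    rw [hld] at hi
    rw [List.getElem_drop, List.getElem_drop]
    rcases Nat.lt_or_ge (m + i + 1) l.length with h1 | h1
    · have := h.2 (m + i) (by omega)
      simp only [Nat.mod_eq_of_lt (by omega : m + i + 1 < l.length)] at this
      have hmod : (i + 1) % (l.drop m).length = i + 1 := by
        rw [hld]; exact Nat.mod_eq_of_lt (by omega)
      simp only [hmod]
      simpa [Nat.add_assoc] using this
    · have h2 := h.2 (m + i) (by omega)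
      have hmi : m + i = l.length - 1 := by omega
      have : (m + i + 1) % l.length = 0 := by
        rw [hmi, Nat.sub_add_cancel hpos, Nat.mod_self]
      simp only [this] at h2
      have hmod : (i + 1) % (l.drop m).length = 0 := by
        rw [hld]
        have h3 : i + 1 = l.length - m := by omega
        rw [h3, Nat.mod_self]
      simp only [hmod]
      simp only [Nat.add_zero]
      rw [h2, hsrc]

lemma primitive_length_le [Fintype V] [DecidableEq V] (hp : IsPrimitiveCycle a l) :
    l.length ≤ Fintype.card V := by
  by_contra hcon
  push_neg at hcon
  have hnd : ¬ (l.map Prod.fst).Nodup := by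
    intro hn
    have := hn.length_le_card
    rw [List.length_map] at this
    omega
  rw [List.nodup_iff_injective_get] at hnd
  rw [Function.not_injective_iff] at hnd
  obtain ⟨i, j, hij, hne⟩ := hnd
  -- wlog i < j
  have key : ∀ (p q : ℕ) (hp' : p < l.length) (hq : q < l.length), p < q →
      (l[p]'hp').1 = (l[q]'hq).1 → False := by
    intro p q hp' hq hpq hsrc
    have hr := cycle_rotate hp.1 p
    have hlenr : (l.rotate p).length = l.length := List.length_rotate l p
    have hg : ∀ (m : ℕ) (hm : m < (l.rotate p).length),
        (l.rotate p)[m]'hm = l[(m + p) % l.length]'(Nat.mod_lt _ (by omega)) := by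
      intro m hm
      have := List.get_rotate l p ⟨m, hm⟩
      simpa [List.get_eq_getElem] using this
    have hmlt : q - p < (l.rotate p).length := by omega
    have hsrc' : ((l.rotate p)[q-p]'hmlt).1 = ((l.rotate p)[0]'(by omega)).1 := by
      rw [hg, hg]
      have e1 : (q - p + p) % l.length = q := by
        rw [Nat.sub_add_cancel (le_of_lt hpq)]; exact Nat.mod_eq_of_lt hq
      have e2 : (0 + p) % l.length = p := by
        rw [Nat.zero_add]; exact Nat.mod_eq_of_lt hp'
      simp only [e1, e2]
      exact hsrc.symm
    obtain ⟨c1, c2⟩ := cycle_split hr (q - p) (by omega) hmlt hsrc'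
    exact hp.2 ⟨p, _, _, c1, c2, (List.take_append_drop (q-p) (l.rotate p)).symm⟩
  have hgm : ∀ (x : Fin (l.map Prod.fst).length),
      (l.map Prod.fst).get x = (l[x.1]'(by have := x.2; simpa using this)).1 := by
    intro x
    simp [List.get_eq_getElem]
  have hij' : (l[i.1]'(by have := i.2; simpa using this)).1
      = (l[j.1]'(by have := j.2; simpa using this)).1 := by
    rw [← hgm i, ← hgm j, hij]
  rcases lt_trichotomy i.1 j.1 with h | h | h
  · exact key i.1 j.1 (by have := i.2; simpa using this) (by have := j.2; simpa using this) h hij'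
  · exact hne (Fin.ext h)
  · exact key j.1 i.1 (by have := j.2; simpa using this) (by have := i.2; simpa using this) h hij'.symm

lemma cycle_rot_equivalence : Equivalence (CycleRot a) := by
  constructor
  · intro x; exact ⟨0, List.rotate_zero x.1⟩
  · rintro x y ⟨k, hk⟩
    have hlen : x.1.length = y.1.length := by rw [← hk, List.length_rotate]
    have hnx : x.1 ≠ [] := x.2.1.1
    have hpos : 0 < x.1.length := List.length_pos_iff.mpr hnx
    refine ⟨x.1.length - k % x.1.length, ?_⟩
    rw [← hk, List.rotate_rotate]
    have hz : (k + (x.1.length - k % x.1.length)) % x.1.length = 0 := by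
      obtain ⟨t, ht⟩ : ∃ t, t = x.1.length * (k / x.1.length) := ⟨_, rfl⟩
      have hdm : t + k % x.1.length = k := by rw [ht]; exact Nat.div_add_mod k x.1.length
      have hlt2 : k % x.1.length < x.1.length := Nat.mod_lt _ hpos
      have hstep : k + (x.1.length - k % x.1.length) = t + x.1.length := by omega
      rw [hstep, Nat.add_mod_right, ht]
      exact Nat.mul_mod_right _ _
    rw [← List.rotate_mod, hz, List.rotate_zero]
  · rintro x y z ⟨k, hk⟩ ⟨m, hm⟩
    exact ⟨k + m, by rw [← List.rotate_rotate, hk, hm]⟩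

lemma card_quot {n : ℕ} (repL : Fin n → List (V × V × ℕ))
    (hprim : ∀ i, IsPrimitiveCycle a (repL i))
    (hinj : ∀ i j : Fin n, (∃ k, (repL i).rotate k = repL j) → i = j)
    (hsurj : ∀ x : {l : List (V × V × ℕ) // IsPrimitiveCycle a l},
      ∃ i, ∃ k, (repL i).rotate k = x.1) :
    Nat.card (Quot (CycleRot a)) = n := by
  have heqv : Equivalence (CycleRot a) := cycle_rot_equivalence
  have hb : Function.Bijective
      (fun i : Fin n => Quot.mk (CycleRot a) ⟨repL i, hprim i⟩) := by
    constructor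
    · intro i j h
      have := Quot.eqvGen_exact h
      rw [heqv.eqvGen_iff] at this
      exact hinj i j this
    · intro q
      induction q using Quot.ind with
      | _ x =>
        obtain ⟨i, k, hk⟩ := hsurj x
        exact ⟨i, Quot.sound ⟨k, by rw [hk]⟩⟩
  rw [← Nat.card_eq_of_bijective _ hb, Nat.card_eq_fintype_card, Fintype.card_fin]

lemma no_loop_two_le (hnl : ∀ v, a v v = 0) (hc : IsOrientedCycle a l) : 2 ≤ l.length := by
  match l with
  | [] => exact absurd rfl hc.1
  | [e] =>
    obtain ⟨-, harr, -, hcl⟩ := hc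
    simp only [List.getLast?_singleton, List.head?_cons, Option.map_some,
      Option.some.injEq] at hcl
    have := harr e (by simp)
    rw [hcl, hnl] at this
    omega
  | e :: f :: t => simp only [List.length_cons]; omega

lemma primitive_of_short (hnl : ∀ v, a v v = 0) (hc : IsOrientedCycle a l)
    (h3 : l.length ≤ 3) : IsPrimitiveCycle a l := by
  refine ⟨hc, ?_⟩
  rintro ⟨k, l₁, l₂, h₁, h₂, heq⟩
  have := no_loop_two_le hnl h₁
  have := no_loop_two_le hnl h₂
  have : (l.rotate k).length = l₁.length + l₂.length := by rw [heq, List.length_append]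
  rw [List.length_rotate] at this
  omega

lemma rot_bounded {α : Type*} {l l' : List α} (hne : l ≠ []) (h : ∃ k, l.rotate k = l') :
    ∃ k < l.length, l.rotate k = l' := by
  obtain ⟨k, hk⟩ := h
  exact ⟨k % l.length, Nat.mod_lt _ (List.length_pos_iff.mpr hne), by rw [List.rotate_mod, hk]⟩

end Generic

section Quivers

def A1 : Fin 3 → Fin 3 → ℕ := fun i j => if i = j then 0 else 1
def A2 : Fin 3 → Fin 3 → ℕ := fun i j => if j = i + 1 then 2 else 0
def A3 : Fin 2 → Fin 2 → ℕ := fun i j =>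
  if i = 0 ∧ j = 1 then 2 else if i = 1 ∧ j = 0 then 3 else 0

def repL1 : Fin 5 → List (Fin 3 × Fin 3 × ℕ) :=
  ![[(0,1,0),(1,0,0)], [(0,2,0),(2,0,0)], [(1,2,0),(2,1,0)],
    [(0,1,0),(1,2,0),(2,0,0)], [(0,2,0),(2,1,0),(1,0,0)]]

def allC1 : List (List (Fin 3 × Fin 3 × ℕ)) :=
  [[(0,1,0),(1,0,0)], [(1,0,0),(0,1,0)],
   [(0,2,0),(2,0,0)], [(2,0,0),(0,2,0)],
   [(1,2,0),(2,1,0)], [(2,1,0),(1,2,0)],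
   [(0,1,0),(1,2,0),(2,0,0)], [(1,2,0),(2,0,0),(0,1,0)], [(2,0,0),(0,1,0),(1,2,0)],
   [(0,2,0),(2,1,0),(1,0,0)], [(2,1,0),(1,0,0),(0,2,0)], [(1,0,0),(0,2,0),(2,1,0)]]

lemma classify1 {l : List (Fin 3 × Fin 3 × ℕ)} (hc : IsOrientedCycle A1 l)
    (hlen : l.length ≤ 3) : l ∈ allC1 := by
  obtain ⟨hne, harr, hch, hcl⟩ := hc
  have hb : ∀ s t, A1 s t ≤ 1 := by decide
  rcases l with - | ⟨⟨s₁, t₁, k₁⟩, l⟩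
  · exact absurd rfl hne
  have ha1 : k₁ < A1 s₁ t₁ := harr (s₁, t₁, k₁) (by simp)
  have hk1 : k₁ = 0 := by have := hb s₁ t₁; omega
  subst hk1
  rcases l with - | ⟨⟨s₂, t₂, k₂⟩, l⟩
  · simp only [List.getLast?_singleton, List.head?_cons, Option.map_some,
      Option.some.injEq] at hcl
    clear hch hne harr hlen
    revert ha1 hcl; revert s₁ t₁; decide
  have ha2 : k₂ < A1 s₂ t₂ := harr (s₂, t₂, k₂) (by simp)
  have hk2 : k₂ = 0 := by have := hb s₂ t₂; omega
  subst hk2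
  rcases l with - | ⟨⟨s₃, t₃, k₃⟩, l⟩
  · simp only [List.Chain', List.isChain_cons_cons, List.isChain_singleton, and_true] at hch
    simp only [List.getLast?_cons_cons, List.getLast?_singleton, List.head?_cons,
      Option.map_some, Option.some.injEq] at hcl
    clear hne harr hlen
    revert ha1 ha2 hch hcl; revert s₁ t₁ s₂ t₂; decide
  have ha3 : k₃ < A1 s₃ t₃ := harr (s₃, t₃, k₃) (by simp)
  have hk3 : k₃ = 0 := by have := hb s₃ t₃; omega
  subst hk3
  have hl : l = [] := by
    simp only [List.length_cons] at hlen
    exact List.length_eq_zero_iff.mp (by omega)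
  subst hl
  simp only [List.Chain', List.isChain_cons_cons, List.isChain_singleton, and_true] at hch
  simp only [List.getLast?_cons_cons, List.getLast?_singleton, List.head?_cons,
    Option.map_some, Option.some.injEq] at hcl
  clear hne harr hlen
  revert ha1 ha2 ha3 hch hcl; revert s₁ t₁ s₂ t₂ s₃ t₃; decide

lemma card1 : Nat.card (Quot (CycleRot A1)) = 5 := by
  apply card_quot repL1
  · intro i
    refine primitive_of_short (by decide) ?_ (by fin_cases i <;> decide)
    refine ⟨?_, ?_, ?_, ?_⟩
    · fin_cases i <;> decide
    · fin_cases i <;> decide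
    · fin_cases i <;> (repeat constructor)
    · fin_cases i <;> decide
  · intro i j hk
    have hlen : ∀ i : Fin 5, (repL1 i).length ≤ 3 := by decide
    have hne : repL1 i ≠ [] := by fin_cases i <;> decide
    obtain ⟨k, hk3, hkk⟩ := rot_bounded hne hk
    have hwit : ∀ i j : Fin 5, ∀ k : Fin 3, (repL1 i).rotate k.1 = repL1 j → i = j := by decide
    exact hwit i j ⟨k, by have := hlen i; omega⟩ hkk
  · rintro ⟨l, hp⟩
    have hlen : l.length ≤ 3 := by simpa using primitive_length_le hp
    have hmem : l ∈ allC1 := classify1 hp.1 hlen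
    have hwit : ∀ m ∈ allC1, ∃ i : Fin 5, ∃ k : Fin 3, (repL1 i).rotate k.1 = m := by decide
    obtain ⟨i, k, hik⟩ := hwit l hmem
    exact ⟨i, k.1, hik⟩

def repL2 : Fin 8 → List (Fin 3 × Fin 3 × ℕ) :=
  ![[(0,1,0),(1,2,0),(2,0,0)], [(0,1,0),(1,2,0),(2,0,1)], [(0,1,0),(1,2,1),(2,0,0)], [(0,1,0),(1,2,1),(2,0,1)], [(0,1,1),(1,2,0),(2,0,0)], [(0,1,1),(1,2,0),(2,0,1)], [(0,1,1),(1,2,1),(2,0,0)], [(0,1,1),(1,2,1),(2,0,1)]]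

def allC2 : List (List (Fin 3 × Fin 3 × ℕ)) :=
  [[(0,1,0),(1,2,0),(2,0,0)], [(0,1,0),(1,2,0),(2,0,1)], [(0,1,0),(1,2,1),(2,0,0)], [(0,1,0),(1,2,1),(2,0,1)], [(0,1,1),(1,2,0),(2,0,0)], [(0,1,1),(1,2,0),(2,0,1)], [(0,1,1),(1,2,1),(2,0,0)], [(0,1,1),(1,2,1),(2,0,1)], [(1,2,0),(2,0,0),(0,1,0)], [(1,2,0),(2,0,0),(0,1,1)], [(1,2,0),(2,0,1),(0,1,0)], [(1,2,0),(2,0,1),(0,1,1)], [(1,2,1),(2,0,0),(0,1,0)], [(1,2,1),(2,0,0),(0,1,1)], [(1,2,1),(2,0,1),(0,1,0)], [(1,2,1),(2,0,1),(0,1,1)], [(2,0,0),(0,1,0),(1,2,0)], [(2,0,0),(0,1,0),(1,2,1)], [(2,0,0),(0,1,1),(1,2,0)], [(2,0,0),(0,1,1),(1,2,1)], [(2,0,1),(0,1,0),(1,2,0)], [(2,0,1),(0,1,0),(1,2,1)], [(2,0,1),(0,1,1),(1,2,0)], [(2,0,1),(0,1,1),(1,2,1)]]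

def repL3 : Fin 6 → List (Fin 2 × Fin 2 × ℕ) :=
  ![[(0,1,0),(1,0,0)], [(0,1,0),(1,0,1)], [(0,1,0),(1,0,2)], [(0,1,1),(1,0,0)], [(0,1,1),(1,0,1)], [(0,1,1),(1,0,2)]]

def allC3 : List (List (Fin 2 × Fin 2 × ℕ)) :=
  [[(0,1,0),(1,0,0)], [(0,1,0),(1,0,1)], [(0,1,0),(1,0,2)], [(0,1,1),(1,0,0)], [(0,1,1),(1,0,1)], [(0,1,1),(1,0,2)], [(1,0,0),(0,1,0)], [(1,0,1),(0,1,0)], [(1,0,2),(0,1,0)], [(1,0,0),(0,1,1)], [(1,0,1),(0,1,1)], [(1,0,2),(0,1,1)]]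

lemma classify2 {l : List (Fin 3 × Fin 3 × ℕ)} (hc : IsOrientedCycle A2 l)
    (hlen : l.length ≤ 3) : l ∈ allC2 := by
  obtain ⟨hne, harr, hch, hcl⟩ := hc
  have hb : ∀ s t, A2 s t ≤ 2 := by decide
  rcases l with - | ⟨⟨s₁, t₁, k₁⟩, l⟩
  · exact absurd rfl hne
  have ha1 : k₁ < A2 s₁ t₁ := harr (s₁, t₁, k₁) (by simp)
  have hk1 : k₁ = 0 ∨ k₁ = 1 := by have := hb s₁ t₁; omega
  rcases l with - | ⟨⟨s₂, t₂, k₂⟩, l⟩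
  · simp only [List.getLast?_singleton, List.head?_cons, Option.map_some,
      Option.some.injEq] at hcl
    clear hch hne harr hlen
    rcases hk1 with rfl | rfl <;> (revert ha1 hcl; revert s₁ t₁; decide)
  have ha2 : k₂ < A2 s₂ t₂ := harr (s₂, t₂, k₂) (by simp)
  have hk2 : k₂ = 0 ∨ k₂ = 1 := by have := hb s₂ t₂; omega
  rcases l with - | ⟨⟨s₃, t₃, k₃⟩, l⟩
  · simp only [List.Chain', List.isChain_cons_cons, List.isChain_singleton, and_true] at hch
    simp only [List.getLast?_cons_cons, List.getLast?_singleton, List.head?_cons,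
      Option.map_some, Option.some.injEq] at hcl
    clear hne harr hlen
    rcases hk1 with rfl | rfl <;> rcases hk2 with rfl | rfl <;>
      (revert ha1 ha2 hch hcl; revert s₁ t₁ s₂ t₂; decide)
  have ha3 : k₃ < A2 s₃ t₃ := harr (s₃, t₃, k₃) (by simp)
  have hk3 : k₃ = 0 ∨ k₃ = 1 := by have := hb s₃ t₃; omega
  have hl : l = [] := by
    simp only [List.length_cons] at hlen
    exact List.length_eq_zero_iff.mp (by omega)
  subst hl
  simp only [List.Chain', List.isChain_cons_cons, List.isChain_singleton, and_true] at hch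
  simp only [List.getLast?_cons_cons, List.getLast?_singleton, List.head?_cons,
    Option.map_some, Option.some.injEq] at hcl
  clear hne harr hlen
  rcases hk1 with rfl | rfl <;> rcases hk2 with rfl | rfl <;> rcases hk3 with rfl | rfl <;>
    (revert ha1 ha2 ha3 hch hcl; revert s₁ t₁ s₂ t₂ s₃ t₃; decide)

lemma card2 : Nat.card (Quot (CycleRot A2)) = 8 := by
  apply card_quot repL2
  · intro i
    refine primitive_of_short (by decide) ?_ (by fin_cases i <;> decide)
    refine ⟨?_, ?_, ?_, ?_⟩
    · fin_cases i <;> decide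
    · fin_cases i <;> decide
    · fin_cases i <;> (repeat constructor)
    · fin_cases i <;> decide
  · intro i j hk
    have hlen : ∀ i : Fin 8, (repL2 i).length ≤ 3 := by decide
    have hne : repL2 i ≠ [] := by fin_cases i <;> decide
    obtain ⟨k, hk3, hkk⟩ := rot_bounded hne hk
    have hwit : ∀ i j : Fin 8, ∀ k : Fin 3, (repL2 i).rotate k.1 = repL2 j → i = j := by decide
    exact hwit i j ⟨k, by have := hlen i; omega⟩ hkk
  · rintro ⟨l, hp⟩
    have hlen : l.length ≤ 3 := by simpa using primitive_length_le hp
    have hmem : l ∈ allC2 := classify2 hp.1 hlen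
    have hwit : ∀ m ∈ allC2, ∃ i : Fin 8, ∃ k : Fin 3, (repL2 i).rotate k.1 = m := by decide
    obtain ⟨i, k, hik⟩ := hwit l hmem
    exact ⟨i, k.1, hik⟩

lemma classify3 {l : List (Fin 2 × Fin 2 × ℕ)} (hc : IsOrientedCycle A3 l)
    (hlen : l.length ≤ 2) : l ∈ allC3 := by
  obtain ⟨hne, harr, hch, hcl⟩ := hc
  have hb : ∀ s t, A3 s t ≤ 3 := by decide
  rcases l with - | ⟨⟨s₁, t₁, k₁⟩, l⟩
  · exact absurd rfl hne
  have ha1 : k₁ < A3 s₁ t₁ := harr (s₁, t₁, k₁) (by simp)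
  have hk1 : k₁ = 0 ∨ k₁ = 1 ∨ k₁ = 2 := by have := hb s₁ t₁; omega
  rcases l with - | ⟨⟨s₂, t₂, k₂⟩, l⟩
  · simp only [List.getLast?_singleton, List.head?_cons, Option.map_some,
      Option.some.injEq] at hcl
    clear hch hne harr hlen
    rcases hk1 with rfl | rfl | rfl <;> (revert ha1 hcl; revert s₁ t₁; decide)
  have ha2 : k₂ < A3 s₂ t₂ := harr (s₂, t₂, k₂) (by simp)
  have hk2 : k₂ = 0 ∨ k₂ = 1 ∨ k₂ = 2 := by have := hb s₂ t₂; omega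
  have hl : l = [] := by
    simp only [List.length_cons] at hlen
    exact List.length_eq_zero_iff.mp (by omega)
  subst hl
  simp only [List.Chain', List.isChain_cons_cons, List.isChain_singleton, and_true] at hch
  simp only [List.getLast?_cons_cons, List.getLast?_singleton, List.head?_cons,
    Option.map_some, Option.some.injEq] at hcl
  clear hne harr hlen
  rcases hk1 with rfl | rfl | rfl <;> rcases hk2 with rfl | rfl | rfl <;>
    (revert ha1 ha2 hch hcl; revert s₁ t₁ s₂ t₂; decide)

lemma card3 : Nat.card (Quot (CycleRot A3)) = 6 := by
  apply card_quot repL3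
  · intro i
    refine primitive_of_short (by decide) ?_ (by fin_cases i <;> decide)
    refine ⟨?_, ?_, ?_, ?_⟩
    · fin_cases i <;> decide
    · fin_cases i <;> decide
    · fin_cases i <;> (repeat constructor)
    · fin_cases i <;> decide
  · intro i j hk
    have hlen : ∀ i : Fin 6, (repL3 i).length ≤ 2 := by decide
    have hne : repL3 i ≠ [] := by fin_cases i <;> decide
    obtain ⟨k, hk3, hkk⟩ := rot_bounded hne hk
    have hwit : ∀ i j : Fin 6, ∀ k : Fin 2, (repL3 i).rotate k.1 = repL3 j → i = j := by decide
    exact hwit i j ⟨k, by have := hlen i; omega⟩ hkk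
  · rintro ⟨l, hp⟩
    have hlen : l.length ≤ 2 := by simpa using primitive_length_le hp
    have hmem : l ∈ allC3 := classify3 hp.1 hlen
    have hwit : ∀ m ∈ allC3, ∃ i : Fin 6, ∃ k : Fin 2, (repL3 i).rotate k.1 = m := by decide
    obtain ⟨i, k, hik⟩ := hwit l hmem
    exact ⟨i, k.1, hik⟩

end Quivers

/-- The quivers of types `4_{3a}`, `4_{3b}`, `4_2` have respectively 5, 8 and 6
primitive oriented cycles; in particular these numbers are pairwise distinct. -/
theorem primitive_cycles_dimension_four_distinct :
    let a₁ : Fin 3 → Fin 3 → ℕ := fun i j => if i = j then 0 else 1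
    let a₂ : Fin 3 → Fin 3 → ℕ := fun i j => if j = i + 1 then 2 else 0
    let a₃ : Fin 2 → Fin 2 → ℕ := fun i j =>
      if i = 0 ∧ j = 1 then 2 else if i = 1 ∧ j = 0 then 3 else 0
    Nat.card (Quot (CycleRot a₁)) = 5 ∧
    Nat.card (Quot (CycleRot a₂)) = 8 ∧
    Nat.card (Quot (CycleRot a₃)) = 6 ∧
    (5 : ℕ) ≠ 8 ∧ (5 : ℕ) ≠ 6 ∧ (8 : ℕ) ≠ 6 := by
  intro a₁ a₂ a₃
  exact ⟨card1, card2, card3, by decide, by decide, by decide⟩
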